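/- arXiv:2210.13694 — 3 statements merged into one kernel-verified Lean document; each statement's English description precedes it below -/
import Mathlib

section
/- Let c ≥ 1 and Q ≥ 0 be real numbers, and let a : ℕ → ℝ be a sequence with a(0) = 0 such that a(l) − a(l−1) ≥ (Q − a(l−1))/c for every integer l ≥ 1. Then for every natural number L, a(L) ≥ (1 − e^{−L/c}) · Q. -/
/-- **Greedy recursion bound.** If `c ≥ 1`, `Q ≥ 0`, `a 0 = 0` and
`a l − a (l−1) ≥ (Q − a (l−1)) / c` for every `l ≥ 1`, then
`a L ≥ (1 − e^{−L/c}) · Q` for every natural number `L`. -/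
theorem stmt_3 (c Q : ℝ) (hc : 1 ≤ c) (hQ : 0 ≤ Q) (a : ℕ → ℝ) (ha0 : a 0 = 0)
    (hrec : ∀ l : ℕ, 1 ≤ l → a l - a (l - 1) ≥ (Q - a (l - 1)) / c) :
    ∀ L : ℕ, a L ≥ (1 - Real.exp (-(L : ℝ) / c)) * Q := by
  have hc0 : (0:ℝ) < c := lt_of_lt_of_le one_pos hc
  have hr0 : (0:ℝ) ≤ 1 - 1/c := by
    have : 1/c ≤ 1 := by
      rw [div_le_one hc0]; exact hc
    linarith
  have key : ∀ L : ℕ, Q - a L ≤ (1 - 1/c)^L * Q := by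
    intro L
    induction L with
    | zero => simp [ha0]
    | succ n ih =>
      have h := hrec (n+1) (by omega)
      simp only [Nat.add_sub_cancel] at h
      have : Q - a (n+1) ≤ (1 - 1/c) * (Q - a n) := by
        have heq : (1 - 1/c) * (Q - a n) = (Q - a n) - (Q - a n)/c := by
          field_simp
        linarith [h]
      calc Q - a (n+1) ≤ (1 - 1/c) * (Q - a n) := this
        _ ≤ (1 - 1/c) * ((1 - 1/c)^n * Q) := by
            exact mul_le_mul_of_nonneg_left ih hr0
        _ = (1 - 1/c)^(n+1) * Q := by ring
  intro L
  have hexp : (1 - 1/c)^L ≤ Real.exp (-(L:ℝ)/c) := by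
    have h1 : 1 - 1/c ≤ Real.exp (-(1/c)) := by
      have := Real.add_one_le_exp (-(1/c))
      linarith
    calc (1 - 1/c)^L ≤ (Real.exp (-(1/c)))^L := pow_le_pow_left₀ hr0 h1 L
      _ = Real.exp (-(L:ℝ)/c) := by
        rw [← Real.exp_nat_mul]; ring_nf
  have := key L
  have h2 : (1 - 1/c)^L * Q ≤ Real.exp (-(L:ℝ)/c) * Q :=
    mul_le_mul_of_nonneg_right hexp hQ
  nlinarith
end

section
/- Suppose f is worst-case submodular. Let ψ be a partial realization consistent with some realization in U, and let e_1, …, e_k be distinct items in E \ dom(ψ). Then there exist states o_1, …, o_k such that, setting ψ_0 = ψ and ψ_i = ψ_{i−1} ∪ {(e_i, o_i)} for 1 ≤ i ≤ k, each o_i belongs to O(e_i, ψ_{i−1}) and f(ψ_k) − f(ψ) ≤ Σ_{i=1}^{k} Δwc(e_i | ψ). -/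
namespace WCAS

variable {ι O : Type*}

/-- The domain of a partial realization `ψ : ι → Option O`. -/
def dom (ψ : ι → Option O) : Set ι := {e | ψ e ≠ none}

/-- A (full) realization `φ` is consistent with a partial realization `ψ`. -/
def consistent (φ : ι → O) (ψ : ι → Option O) : Prop :=
  ∀ e o, ψ e = some o → φ e = o

/-- `ψ` is a subrealization of `ψ'` (written `ψ ⊆ ψ'`). -/
def subreal (ψ ψ' : ι → Option O) : Prop :=
  ∀ e o, ψ e = some o → ψ' e = some o

/-- Extend a partial realization `ψ` by observing state `o` for item `e`. -/
def extendPR [DecidableEq ι] (ψ : ι → Option O) (e : ι) (o : O) : ι → Option O :=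
  fun x => if x = e then some o else ψ x

/-- The empty partial realization. -/
def emptyPR : ι → Option O := fun _ => none

/-- View a full realization as a partial realization with full domain. -/
def toPR (φ : ι → O) : ι → Option O := fun e => some (φ e)

/-- `O(e, ψ)`: the set of possible states of item `e` given observation `ψ`,
with respect to the set `U` of possible realizations. -/
def Ostates (U : Set (ι → O)) (e : ι) (ψ : ι → Option O) : Set O :=
  {o | ∃ φ ∈ U, consistent φ ψ ∧ φ e = o}

/-- The worst-case marginal utility `Δwc(e | ψ)` of item `e` on top of `ψ`. -/
noncomputable def Dwc [DecidableEq ι] (f : (ι → Option O) → ℝ) (U : Set (ι → O))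
    (e : ι) (ψ : ι → Option O) : ℝ :=
  sInf ((fun o => f (extendPR ψ e o) - f ψ) '' Ostates U e ψ)

/-- `f` is worst-case monotone. -/
def WCMonotone [DecidableEq ι] (f : (ι → Option O) → ℝ) (U : Set (ι → O)) : Prop :=
  ∀ ψ : ι → Option O, (∃ φ ∈ U, consistent φ ψ) →
    ∀ e, e ∉ dom ψ → 0 ≤ Dwc f U e ψ

/-- `f` is worst-case submodular. -/
def WCSubmodular [DecidableEq ι] (f : (ι → Option O) → ℝ) (U : Set (ι → O)) : Prop :=
  ∀ ψ ψ' : ι → Option O, subreal ψ ψ' → (∃ φ ∈ U, consistent φ ψ') →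
    ∀ e, e ∉ dom ψ' → Dwc f U e ψ' ≤ Dwc f U e ψ

/-- An adaptive policy maps each observation either to an item outside its
domain or to `none` (stop). -/
def ValidPolicy (π : (ι → Option O) → Option ι) : Prop :=
  ∀ ψ e, π ψ = some e → ψ e = none

/-- One step of executing policy `π` under realization `φ`. -/
def stepPolicy [DecidableEq ι] (π : (ι → Option O) → Option ι) (φ : ι → O)
    (ψ : ι → Option O) : ι → Option O :=
  match π ψ with
  | none => ψ
  | some e => extendPR ψ e (φ e)

/-- Executing policy `π` under realization `φ` for `n` steps, starting from the
empty observation. -/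
def runPolicy [DecidableEq ι] (π : (ι → Option O) → Option ι) (φ : ι → O) :
    ℕ → ι → Option O
  | 0 => emptyPR
  | n + 1 => stepPolicy π φ (runPolicy π φ n)

/-- The final partial realization `ψ(π, φ)` produced by executing `π` under `φ`
(a valid policy over a finite ground set terminates within `card ι` steps). -/
def finalPR [DecidableEq ι] [Fintype ι] (π : (ι → Option O) → Option ι) (φ : ι → O) :
    ι → Option O :=
  runPolicy π φ (Fintype.card ι)

open scoped Classical in
/-- The total cost `c(dom ψ)` of the items in the domain of `ψ`. -/
noncomputable def costPR [Fintype ι] (c : ι → ℝ) (ψ : ι → Option O) : ℝ :=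
  ∑ e : ι, if (ψ e).isSome then c e else 0

/-- The worst-case cost `c_wc(π) = max_{φ ∈ U} c(dom ψ(π, φ))`. -/
noncomputable def cwc [DecidableEq ι] [Fintype ι] (c : ι → ℝ) (U : Set (ι → O))
    (π : (ι → Option O) → Option ι) : ℝ :=
  sSup ((fun φ => costPR c (finalPR π φ)) '' U)

/-- The worst-case utility `f_wc(π) = min_{φ ∈ U} f(ψ(π, φ))`. -/
noncomputable def fwc [DecidableEq ι] [Fintype ι] (f : (ι → Option O) → ℝ)
    (U : Set (ι → O)) (π : (ι → Option O) → Option ι) : ℝ :=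
  sInf ((fun φ => f (finalPR π φ)) '' U)

/-- `ψ` is reachable by executing `π` under some realization in `U`. -/
def Reachable [DecidableEq ι] (π : (ι → Option O) → Option ι) (U : Set (ι → O))
    (ψ : ι → Option O) : Prop :=
  ∃ φ ∈ U, ∃ n, runPolicy π φ n = ψ

/-- Policy `π` covers the goal value `Q`: under every realization in `U`,
its final observation has utility at least `Q`. -/
def Covers [DecidableEq ι] [Fintype ι] (f : (ι → Option O) → ℝ) (U : Set (ι → O))
    (π : (ι → Option O) → Option ι) (Q : ℝ) : Prop :=
  ∀ φ ∈ U, Q ≤ f (finalPR π φ)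

/-- The worst-case density-greedy policy for the cover problem with goal `Q`:
it stops at observations with `f ψ ≥ Q`, and at any reachable observation with
`f ψ < Q` it selects an item maximizing `Δwc(e | ψ) / c(e)`. -/
def CoverGreedy [DecidableEq ι] [Fintype ι] (f : (ι → Option O) → ℝ)
    (U : Set (ι → O)) (c : ι → ℝ) (Q : ℝ) (π : (ι → Option O) → Option ι) : Prop :=
  ValidPolicy π ∧
  (∀ ψ : ι → Option O, Q ≤ f ψ → π ψ = none) ∧
  (∀ ψ : ι → Option O, Reachable π U ψ → f ψ < Q →
    ∃ e, e ∉ dom ψ ∧ π ψ = some e ∧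
      ∀ e', e' ∉ dom ψ → Dwc f U e' ψ / c e' ≤ Dwc f U e ψ / c e)

/-- The budgeted worst-case density-greedy policy: at any reachable observation
it picks a density-maximizing item and selects it if the budget permits,
stopping otherwise. -/
def BudgetGreedy [DecidableEq ι] [Fintype ι] (f : (ι → Option O) → ℝ)
    (U : Set (ι → O)) (c : ι → ℝ) (B : ℝ) (π : (ι → Option O) → Option ι) : Prop :=
  ValidPolicy π ∧
  ∀ ψ : ι → Option O, Reachable π U ψ → dom ψ ≠ Set.univ →
    ∃ e, e ∉ dom ψ ∧
      (∀ e', e' ∉ dom ψ → Dwc f U e' ψ / c e' ≤ Dwc f U e ψ / c e) ∧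
      ((costPR c ψ + c e ≤ B ∧ π ψ = some e) ∨ (B < costPR c ψ + c e ∧ π ψ = none))

/-- The relaxed budgeted worst-case density-greedy policy: it keeps selecting
density-maximizing items while the cost spent so far is within the budget
(thus also selecting the first item that makes the total cost exceed the
budget), and stops once the budget has been exceeded. -/
def RelaxedBudgetGreedy [DecidableEq ι] [Fintype ι] (f : (ι → Option O) → ℝ)
    (U : Set (ι → O)) (c : ι → ℝ) (B : ℝ) (π : (ι → Option O) → Option ι) : Prop :=
  ValidPolicy π ∧
  (∀ ψ : ι → Option O, Reachable π U ψ → B < costPR c ψ → π ψ = none) ∧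
  (∀ ψ : ι → Option O, Reachable π U ψ → costPR c ψ ≤ B → dom ψ ≠ Set.univ →
    ∃ e, e ∉ dom ψ ∧ π ψ = some e ∧
      ∀ e', e' ∉ dom ψ → Dwc f U e' ψ / c e' ≤ Dwc f U e ψ / c e)

/-- **Adversarial chain bound from worst-case submodularity.** If `f` is
worst-case submodular, `ψ` is consistent with some realization in `U`, and
`e 1, …, e k` are distinct items outside `dom ψ`, then there exist states
`o 1, …, o k` such that, with `ψ 0 = ψ` and `ψ i = ψ (i−1) ∪ {(e i, o i)}`,
each `o i ∈ O(e i, ψ (i−1))` and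
`f (ψ k) − f ψ ≤ ∑ i, Δwc(e i | ψ)`. -/
theorem stmt_6 {ι O : Type*} [Fintype ι] [Nonempty ι] [DecidableEq ι] [Fintype O]
    (U : Set (ι → O)) (hU : U.Nonempty)
    (f : (ι → Option O) → ℝ) (hf0 : ∀ ψ, 0 ≤ f ψ)
    (hsub : WCSubmodular f U)
    (ψ : ι → Option O) (hψ : ∃ φ ∈ U, consistent φ ψ)
    (k : ℕ) (e : Fin k → ι) (hinj : Function.Injective e)
    (hdom : ∀ i : Fin k, e i ∉ dom ψ) :
    ∃ (o : Fin k → O) (ψs : ℕ → ι → Option O), ψs 0 = ψ ∧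
      (∀ i : Fin k, ψs ((i : ℕ) + 1) = extendPR (ψs (i : ℕ)) (e i) (o i)) ∧
      (∀ i : Fin k, o i ∈ Ostates U (e i) (ψs (i : ℕ))) ∧
      f (ψs k) - f ψ ≤ ∑ i : Fin k, Dwc f U (e i) ψ := by

  classical
  obtain ⟨φ₀, hφ₀U, hφ₀c⟩ := hψ
  haveI : Nonempty O := ⟨φ₀ (Classical.arbitrary ι)⟩
  -- existence of a minimizer of the marginal, given consistency and e ∉ dom
  have hexist : ∀ (a : ι) (χ : ι → Option O), (∃ φ ∈ U, consistent φ χ) →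
      ∃ o, o ∈ Ostates U a χ ∧ f (extendPR χ a o) - f χ = Dwc f U a χ := by
    intro a χ ⟨φ, hφU, hφc⟩
    have hne : ((fun o => f (extendPR χ a o) - f χ) '' Ostates U a χ).Nonempty :=
      ⟨_, ⟨φ a, ⟨φ, hφU, hφc, rfl⟩, rfl⟩⟩
    have hfin : ((fun o => f (extendPR χ a o) - f χ) '' Ostates U a χ).Finite :=
      (Set.toFinite _).image _
    have hmem := hne.csInf_mem hfin
    obtain ⟨o, ho, heq⟩ := hmem
    exact ⟨o, ho, heq⟩
  -- the state chosen at each step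
  set pickO : ∀ (n : ℕ), n < k → (ι → Option O) → O := fun n h χ =>
    if hex : ∃ o, o ∈ Ostates U (e ⟨n, h⟩) χ ∧
        f (extendPR χ (e ⟨n, h⟩) o) - f χ = Dwc f U (e ⟨n, h⟩) χ
    then hex.choose else Classical.arbitrary O with hpickO
  -- the chain of partial realizations
  set chain : ℕ → ι → Option O := fun n =>
    Nat.rec ψ (fun m ih => if h : m < k then extendPR ih (e ⟨m, h⟩) (pickO m h ih) else ih) n
    with hchain
  have hchain0 : chain 0 = ψ := rfl
  have hchainS : ∀ (n : ℕ) (h : n < k),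
      chain (n + 1) = extendPR (chain n) (e ⟨n, h⟩) (pickO n h (chain n)) := by
    intro n h
    simp only [hchain]
    rw [dif_pos h]
  -- auxiliary sum function
  set g : ℕ → ℝ := fun i => if h : i < k then Dwc f U (e ⟨i, h⟩) ψ else 0 with hg
  -- main invariant
  have key : ∀ n, n ≤ k →
      (∃ φ ∈ U, consistent φ (chain n)) ∧ subreal ψ (chain n) ∧
      (∀ x, chain n x ≠ ψ x → ∃ j : ℕ, j < n ∧ ∃ hj : j < k, x = e ⟨j, hj⟩) ∧
      f (chain n) - f ψ ≤ ∑ i ∈ Finset.range n, g i := by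
    intro n
    induction n with
    | zero =>
      intro _
      exact ⟨⟨φ₀, hφ₀U, hφ₀c⟩, fun _ _ h => h, fun x hx => absurd rfl hx, by simp [hchain0]⟩
    | succ n ih =>
      intro hnk
      have hn : n < k := hnk
      obtain ⟨hcons, hsr, hdomtr, hsum⟩ := ih (Nat.le_of_lt hn)
      -- e ⟨n, hn⟩ is not in the domain of chain n
      have hnotdom : e ⟨n, hn⟩ ∉ dom (chain n) := by
        intro hd
        by_cases hpe : chain n (e ⟨n, hn⟩) = ψ (e ⟨n, hn⟩)
        · exact hdom ⟨n, hn⟩ (by simpa [dom, hpe] using hd)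
        · obtain ⟨j, hjn, hjk, hje⟩ := hdomtr _ hpe
          have := hinj hje
          simp only [Fin.mk.injEq] at this
          omega
      have hex : ∃ o, o ∈ Ostates U (e ⟨n, hn⟩) (chain n) ∧
          f (extendPR (chain n) (e ⟨n, hn⟩) o) - f (chain n)
            = Dwc f U (e ⟨n, hn⟩) (chain n) := hexist _ _ hcons
      have hpick : pickO n hn (chain n) = hex.choose := by
        simp only [hpickO]
        rw [dif_pos hex]
      obtain ⟨homem, hoeq⟩ := hex.choose_spec
      have hstep : chain (n + 1) = extendPR (chain n) (e ⟨n, hn⟩) hex.choose := by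
        rw [hchainS n hn, hpick]
      obtain ⟨φ, hφU, hφc, hφe⟩ := homem
      have hnone : chain n (e ⟨n, hn⟩) = none := by
        by_contra h; exact hnotdom h
      refine ⟨⟨φ, hφU, ?_⟩, ?_, ?_, ?_⟩
      · intro x o hx
        rw [hstep] at hx
        by_cases hxe : x = e ⟨n, hn⟩
        · subst hxe
          have h2 : some hex.choose = some o := by simpa [extendPR] using hx
          rw [hφe]
          exact Option.some.inj h2
        · simp only [extendPR, if_neg hxe] at hx
          exact hφc x o hx
      · intro x o hx
        have h1 := hsr x o hx
        rw [hstep]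
        have hxe : x ≠ e ⟨n, hn⟩ := by
          intro h; rw [h, hnone] at h1; exact (nomatch h1)
        simp only [extendPR, if_neg hxe]
        exact h1
      · intro x hx
        rw [hstep] at hx
        by_cases hxe : x = e ⟨n, hn⟩
        · exact ⟨n, Nat.lt_succ_self n, hn, hxe⟩
        · simp only [extendPR, if_neg hxe] at hx
          obtain ⟨j, hjn, hjk, hje⟩ := hdomtr x hx
          exact ⟨j, Nat.lt_succ_of_lt hjn, hjk, hje⟩
      · have hDle : Dwc f U (e ⟨n, hn⟩) (chain n) ≤ Dwc f U (e ⟨n, hn⟩) ψ :=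
          hsub ψ (chain n) hsr ⟨φ, hφU, hφc⟩ _ hnotdom
        have hgn : g n = Dwc f U (e ⟨n, hn⟩) ψ := by simp [hg, hn]
        have h1 : f (chain (n + 1)) - f (chain n) ≤ g n := by
          rw [hstep, hoeq, hgn]
          exact hDle
        rw [Finset.sum_range_succ]
        linarith
  obtain ⟨hconsk, hsrk, hdomk, hsumk⟩ := key k le_rfl
  refine ⟨fun i => pickO i i.isLt (chain i), chain, hchain0, ?_, ?_, ?_⟩
  · intro i
    have := hchainS i i.isLt
    simpa [Fin.eta] using this
  · intro i
    obtain ⟨hcons, hsr, hdomtr, hsum⟩ := key i (Nat.le_of_lt i.isLt)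
    have hex : ∃ o, o ∈ Ostates U (e ⟨(i : ℕ), i.isLt⟩) (chain i) ∧
        f (extendPR (chain i) (e ⟨(i : ℕ), i.isLt⟩) o) - f (chain i)
          = Dwc f U (e ⟨(i : ℕ), i.isLt⟩) (chain i) := hexist _ _ hcons
    have hpick : pickO i i.isLt (chain i) = hex.choose := by
      simp only [hpickO]
      rw [dif_pos hex]
    show pickO i i.isLt (chain i) ∈ Ostates U (e i) (chain i)
    rw [hpick]
    have := hex.choose_spec.1
    simpa [Fin.eta] using this
  · have : ∑ i : Fin k, Dwc f U (e i) ψ = ∑ i ∈ Finset.range k, g i := by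
      rw [Finset.sum_range fun i => g i]
      apply Finset.sum_congr rfl
      intro i _
      simp [hg, i.isLt, Fin.eta]
    rw [this]
    exact hsumk


end WCAS
end

section
/- Suppose f is worst-case monotone and worst-case submodular, let Q be a real number, and let π be any adaptive policy that covers Q (i.e., f(ψ(π,φ)) ≥ Q for every φ ∈ U). Then for every partial realization ψ that is consistent with some realization in U and satisfies f(ψ) < Q, there exists an item e ∈ E \ dom(ψ) such that Δwc(e|ψ) · c_wc(π) ≥ (Q − f(ψ)) · c(e). -/
namespace WCAS

variable {ι O : Type*}

section Aux
set_option linter.unusedSectionVars false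

variable [DecidableEq ι]

/-- Merge two partial realizations, giving priority to the first. -/
def merge (ψ ψ' : ι → Option O) : ι → Option O := fun e =>
  match ψ e with
  | some o => some o
  | none => ψ' e

lemma merge_apply_some {ψ ψ' : ι → Option O} {e : ι} {o : O} (h : ψ e = some o) :
    merge ψ ψ' e = some o := by unfold merge; rw [h]

lemma merge_apply_none {ψ ψ' : ι → Option O} {e : ι} (h : ψ e = none) :
    merge ψ ψ' e = ψ' e := by unfold merge; rw [h]

lemma notMem_dom {ψ : ι → Option O} {e : ι} : e ∉ dom ψ ↔ ψ e = none := by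
  simp [dom]

lemma consistent_of_subreal {φ : ι → O} {ψ ψ' : ι → Option O}
    (h : subreal ψ ψ') (hc : consistent φ ψ') : consistent φ ψ :=
  fun e o he => hc e o (h e o he)

lemma consistent_merge {φ : ι → O} {ψ ψ' : ι → Option O}
    (h1 : consistent φ ψ) (h2 : consistent φ ψ') : consistent φ (merge ψ ψ') := by
  intro e o he
  cases hψ : ψ e with
  | none => rw [merge_apply_none hψ] at he; exact h2 e o he
  | some o' => rw [merge_apply_some hψ] at he; cases he; exact h1 e o hψ

lemma subreal_merge_left (ψ ψ' : ι → Option O) : subreal ψ (merge ψ ψ') :=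
  fun _ _ h => merge_apply_some h

lemma subreal_merge_right {φ : ι → O} {ψ ψ' : ι → Option O}
    (h1 : consistent φ ψ) (h2 : consistent φ ψ') : subreal ψ' (merge ψ ψ') := by
  intro e o he
  cases hψ : ψ e with
  | none => rw [merge_apply_none hψ]; exact he
  | some o' =>
    rw [merge_apply_some hψ]
    rw [← h1 e o' hψ, h2 e o he]

lemma subreal_extendPR {ψ : ι → Option O} {e : ι} (he : ψ e = none) (o : O) :
    subreal ψ (extendPR ψ e o) := by
  intro x o' hx
  unfold extendPR
  by_cases hxe : x = e
  · subst hxe; rw [he] at hx; cases hx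
  · rw [if_neg hxe]; exact hx

lemma consistent_extendPR {φ : ι → O} {ψ : ι → Option O} {e : ι}
    (h : consistent φ ψ) : consistent φ (extendPR ψ e (φ e)) := by
  intro x o hx
  unfold extendPR at hx
  by_cases hxe : x = e
  · subst hxe; rw [if_pos rfl] at hx; cases hx; rfl
  · rw [if_neg hxe] at hx; exact h x o hx

lemma Dwc_le [Fintype O] (f : (ι → Option O) → ℝ) (U : Set (ι → O))
    {e : ι} {ψ : ι → Option O} {o : O} (ho : o ∈ Ostates U e ψ) :
    Dwc f U e ψ ≤ f (extendPR ψ e o) - f ψ :=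
  csInf_le ((Set.toFinite (Ostates U e ψ)).image _).bddBelow ⟨o, ho, rfl⟩

lemma exists_Dwc_attained [Fintype O] (f : (ι → Option O) → ℝ) (U : Set (ι → O))
    {e : ι} {ψ : ι → Option O} (hne : (Ostates U e ψ).Nonempty) :
    ∃ o ∈ Ostates U e ψ, f (extendPR ψ e o) - f ψ = Dwc f U e ψ := by
  have hmem := (hne.image (fun o => f (extendPR ψ e o) - f ψ)).csInf_mem
    ((Set.toFinite (Ostates U e ψ)).image _)
  obtain ⟨o, ho, heq⟩ := hmem
  exact ⟨o, ho, heq⟩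

lemma consistent_run (π : (ι → Option O) → Option ι) (φ : ι → O) :
    ∀ n, consistent φ (runPolicy π φ n) := by
  intro n
  induction n with
  | zero => intro e o h; exact absurd h (by simp [runPolicy, emptyPR])
  | succ n ih =>
    simp only [runPolicy, stepPolicy]
    cases hstep : π (runPolicy π φ n) with
    | none => exact ih
    | some e => exact consistent_extendPR ih

lemma run_eq_of_consistent (π : (ι → Option O) → Option ι) (hπ : ValidPolicy π)
    (φ₁ φ₂ : ι → O) : ∀ n, consistent φ₂ (runPolicy π φ₁ n) →
    runPolicy π φ₂ n = runPolicy π φ₁ n := by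
  intro n
  induction n with
  | zero => intro _; rfl
  | succ n ih =>
    intro hcons
    have hsub1 : subreal (runPolicy π φ₁ n) (runPolicy π φ₁ (n + 1)) := by
      simp only [runPolicy, stepPolicy]
      cases hstep : π (runPolicy π φ₁ n) with
      | none => exact fun e o h => h
      | some e => exact subreal_extendPR (hπ _ _ hstep) _
    have heq := ih (consistent_of_subreal hsub1 hcons)
    cases hstep : π (runPolicy π φ₁ n) with
    | none => simp only [runPolicy, stepPolicy, heq, hstep]
    | some e =>
      have hval : φ₂ e = φ₁ e := by
        apply hcons e (φ₁ e)
        simp [runPolicy, stepPolicy, hstep, extendPR]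
      simp only [runPolicy, stepPolicy, heq, hstep, hval]

lemma costPR_nonneg [Fintype ι] (c : ι → ℝ) (hc : ∀ e, 0 < c e) (ψ : ι → Option O) :
    0 ≤ costPR c ψ := by
  apply Finset.sum_nonneg
  intro e _
  split
  · exact (hc e).le
  · exact le_rfl

lemma costPR_le_sum [Fintype ι] (c : ι → ℝ) (hc : ∀ e, 0 < c e) (ψ : ι → Option O) :
    costPR c ψ ≤ ∑ e, c e := by
  apply Finset.sum_le_sum
  intro e _
  split
  · exact le_rfl
  · exact (hc e).le

lemma costPR_extendPR [Fintype ι] (c : ι → ℝ) {ψ : ι → Option O} {e : ι}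
    (he : ψ e = none) (o : O) :
    costPR c (extendPR ψ e o) = costPR c ψ + c e := by
  unfold costPR
  have hstep : ∀ x ∈ Finset.univ,
      (if ((extendPR ψ e o) x).isSome then c x else 0) =
      (if (ψ x).isSome then c x else 0) + (if x = e then c x else 0) := by
    intro x _
    by_cases hx : x = e
    · subst hx; simp [extendPR, he]
    · simp [extendPR, hx]
  rw [Finset.sum_congr rfl hstep, Finset.sum_add_distrib,
    Finset.sum_ite_eq' Finset.univ e c]
  simp

lemma f_mono_of_subreal [Fintype ι] [Fintype O] {U : Set (ι → O)}
    {f : (ι → Option O) → ℝ} (hmono : WCMonotone f U)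
    {φ : ι → O} (hφ : φ ∈ U) :
    ∀ (n : ℕ) (ψ₁ ψ₂ : ι → Option O), subreal ψ₁ ψ₂ → consistent φ ψ₂ →
      (Finset.univ.filter fun e => (ψ₁ e).isNone ∧ (ψ₂ e).isSome).card ≤ n →
      f ψ₁ ≤ f ψ₂ := by
  intro n
  induction n with
  | zero =>
    intro ψ₁ ψ₂ hsub hcons hcard
    have hempty : (Finset.univ.filter fun e => (ψ₁ e).isNone ∧ (ψ₂ e).isSome) = ∅ :=
      Finset.card_eq_zero.mp (Nat.le_zero.mp hcard)
    have heq : ψ₁ = ψ₂ := by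
      funext x
      cases hx : ψ₁ x with
      | some o => exact (hsub x o hx).symm
      | none =>
        cases hx2 : ψ₂ x with
        | none => rfl
        | some o =>
          exfalso
          have : x ∈ (Finset.univ.filter fun e => (ψ₁ e).isNone ∧ (ψ₂ e).isSome) := by
            simp [hx, hx2]
          rw [hempty] at this
          exact absurd this (Finset.notMem_empty x)
    rw [heq]
  | succ n ih =>
    intro ψ₁ ψ₂ hsub hcons hcard
    by_cases hne : (Finset.univ.filter fun e => (ψ₁ e).isNone ∧ (ψ₂ e).isSome).Nonempty
    · obtain ⟨e, he⟩ := hne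
      simp only [Finset.mem_filter, Finset.mem_univ, true_and] at he
      obtain ⟨he1, he2⟩ := he
      have he1' : ψ₁ e = none := Option.isNone_iff_eq_none.mp he1
      obtain ⟨o, ho⟩ := Option.isSome_iff_exists.mp he2
      have hφe : φ e = o := hcons e o ho
      have hcons1 : consistent φ ψ₁ := consistent_of_subreal hsub hcons
      -- f ψ₁ ≤ f (extendPR ψ₁ e (φ e))
      have hDw : 0 ≤ Dwc f U e ψ₁ :=
        hmono ψ₁ ⟨φ, hφ, hcons1⟩ e (notMem_dom.mpr he1')
      have hle : Dwc f U e ψ₁ ≤ f (extendPR ψ₁ e (φ e)) - f ψ₁ :=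
        Dwc_le f U ⟨φ, hφ, hcons1, rfl⟩
      have h1 : f ψ₁ ≤ f (extendPR ψ₁ e (φ e)) := by linarith
      -- recurse
      have hsub' : subreal (extendPR ψ₁ e (φ e)) ψ₂ := by
        intro x o' hx
        unfold extendPR at hx
        by_cases hxe : x = e
        · subst hxe; rw [if_pos rfl] at hx; cases hx; rw [hφe]; exact ho
        · rw [if_neg hxe] at hx; exact hsub x o' hx
      have hcard' : (Finset.univ.filter
          fun x => ((extendPR ψ₁ e (φ e)) x).isNone ∧ (ψ₂ x).isSome).card ≤ n := by
        have hss : (Finset.univ.filter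
            fun x => ((extendPR ψ₁ e (φ e)) x).isNone ∧ (ψ₂ x).isSome) ⊆
            (Finset.univ.filter fun x => (ψ₁ x).isNone ∧ (ψ₂ x).isSome).erase e := by
          intro x hx
          simp only [Finset.mem_filter, Finset.mem_univ, true_and] at hx
          obtain ⟨hx1, hx2⟩ := hx
          have hxe : x ≠ e := by
            intro h
            subst h
            simp [extendPR] at hx1
          rw [Finset.mem_erase]
          refine ⟨hxe, ?_⟩
          simp only [Finset.mem_filter, Finset.mem_univ, true_and]
          unfold extendPR at hx1
          rw [if_neg hxe] at hx1
          exact ⟨hx1, hx2⟩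
        have hmem : e ∈ (Finset.univ.filter fun x => (ψ₁ x).isNone ∧ (ψ₂ x).isSome) := by
          simp [he1', he2]
        have := Finset.card_le_card hss
        rw [Finset.card_erase_of_mem hmem] at this
        omega
      have h2 := ih (extendPR ψ₁ e (φ e)) ψ₂ hsub' hcons hcard'
      linarith
    · rw [Finset.not_nonempty_iff_eq_empty] at hne
      exact ih ψ₁ ψ₂ hsub hcons (by rw [hne]; simp)

end Aux
lemma mainInd [Fintype ι] [DecidableEq ι] [Fintype O]
    (U : Set (ι → O)) (c : ι → ℝ) (hc : ∀ e, 0 < c e)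
    (f : (ι → Option O) → ℝ)
    (hsub : WCSubmodular f U)
    (π : (ι → Option O) → Option ι) (hπ : ValidPolicy π)
    (ψ : ι → Option O) (ρ : ℝ) (hρ0 : 0 ≤ ρ)
    (hρ : ∀ e, ψ e = none → Dwc f U e ψ ≤ ρ * c e) :
    ∀ (k n : ℕ) (φ₀ : ι → O), φ₀ ∈ U → consistent φ₀ ψ →
      ∃ φ ∈ U, consistent φ ψ ∧
        runPolicy π φ n = runPolicy π φ₀ n ∧
        f (merge ψ (runPolicy π φ (n + k))) - f (merge ψ (runPolicy π φ n)) ≤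
          ρ * (costPR c (runPolicy π φ (n + k)) - costPR c (runPolicy π φ n)) := by
  intro k
  induction k with
  | zero =>
    intro n φ₀ hφ₀U hφ₀ψ
    exact ⟨φ₀, hφ₀U, hφ₀ψ, rfl, by simp⟩
  | succ k ih =>
    intro n φ₀ hφ₀U hφ₀ψ
    have hconsn : consistent φ₀ (runPolicy π φ₀ n) := consistent_run π φ₀ n
    have harith : n + (k + 1) = (n + 1) + k := by omega
    cases hstep : π (runPolicy π φ₀ n) with
    | none =>
      obtain ⟨φ, hφU, hφψ, hrun, hineq⟩ := ih (n + 1) φ₀ hφ₀U hφ₀ψ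
      have hrun1 : runPolicy π φ₀ (n + 1) = runPolicy π φ₀ n := by
        simp only [runPolicy, stepPolicy, hstep]
      have hφcons : consistent φ (runPolicy π φ₀ n) := by
        rw [← hrun1, ← hrun]
        exact consistent_run π φ (n + 1)
      have hφn : runPolicy π φ n = runPolicy π φ₀ n :=
        run_eq_of_consistent π hπ φ₀ φ n hφcons
      refine ⟨φ, hφU, hφψ, hφn, ?_⟩
      rw [harith]
      have hsame : runPolicy π φ (n + 1) = runPolicy π φ n := by
        rw [hrun, hrun1, hφn]
      rw [← hsame]
      exact hineq
    | some e =>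
      have hen : runPolicy π φ₀ n e = none := hπ _ e hstep
      have hrun1 : ∀ φ' : ι → O, runPolicy π φ' n = runPolicy π φ₀ n →
          runPolicy π φ' (n + 1) = extendPR (runPolicy π φ₀ n) e (φ' e) := by
        intro φ' h
        simp only [runPolicy, stepPolicy, h, hstep]
      by_cases hcase : ψ e = none
      · -- e outside dom ψ: adversarial choice of observation
        have hMe : merge ψ (runPolicy π φ₀ n) e = none := by
          rw [merge_apply_none hcase]; exact hen
        have hφ₀M : consistent φ₀ (merge ψ (runPolicy π φ₀ n)) :=
          consistent_merge hφ₀ψ hconsn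
        have hOne : (Ostates U e (merge ψ (runPolicy π φ₀ n))).Nonempty :=
          ⟨φ₀ e, φ₀, hφ₀U, hφ₀M, rfl⟩
        obtain ⟨o, ho, hoeq⟩ := exists_Dwc_attained f U hOne
        obtain ⟨φ', hφ'U, hφ'M, hφ'e⟩ := ho
        have hφ'ψ : consistent φ' ψ :=
          consistent_of_subreal (subreal_merge_left ψ _) hφ'M
        have hφ'ψn : consistent φ' (runPolicy π φ₀ n) :=
          consistent_of_subreal (subreal_merge_right hφ₀ψ hconsn) hφ'M
        have hφ'n : runPolicy π φ' n = runPolicy π φ₀ n :=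
          run_eq_of_consistent π hπ φ₀ φ' n hφ'ψn
        obtain ⟨φ, hφU, hφψ, hrunφ, hineq⟩ := ih (n + 1) φ' hφ'U hφ'ψ
        have hrunφ1 : runPolicy π φ (n + 1) = extendPR (runPolicy π φ₀ n) e o := by
          rw [hrunφ, hrun1 φ' hφ'n, hφ'e]
        have hφext : consistent φ (extendPR (runPolicy π φ₀ n) e o) := by
          rw [← hrunφ1]; exact consistent_run π φ (n + 1)
        have hφψn : consistent φ (runPolicy π φ₀ n) :=
          consistent_of_subreal (subreal_extendPR hen o) hφext
        have hφn : runPolicy π φ n = runPolicy π φ₀ n :=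
          run_eq_of_consistent π hπ φ₀ φ n hφψn
        have hmerge1 : merge ψ (extendPR (runPolicy π φ₀ n) e o) =
            extendPR (merge ψ (runPolicy π φ₀ n)) e o := by
          funext x
          by_cases hx : x = e
          · subst hx
            rw [merge_apply_none hcase]
            simp [extendPR]
          · show merge ψ _ x = extendPR _ e o x
            unfold extendPR
            rw [if_neg hx]
            cases hψx : ψ x with
            | some o' => rw [merge_apply_some hψx, merge_apply_some hψx]
            | none =>
              rw [merge_apply_none hψx, merge_apply_none hψx]
              rw [if_neg hx]
        have hφM : consistent φ (merge ψ (runPolicy π φ₀ n)) :=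
          consistent_merge hφψ hφψn
        have hsub1 : Dwc f U e (merge ψ (runPolicy π φ₀ n)) ≤ Dwc f U e ψ :=
          hsub ψ _ (subreal_merge_left ψ _) ⟨φ, hφU, hφM⟩ e (notMem_dom.mpr hMe)
        have hDe : Dwc f U e ψ ≤ ρ * c e := hρ e hcase
        have hcost : costPR c (runPolicy π φ (n + 1)) =
            costPR c (runPolicy π φ₀ n) + c e := by
          rw [hrunφ1]; exact costPR_extendPR c hen o
        refine ⟨φ, hφU, hφψ, hφn, ?_⟩
        rw [harith, hφn]
        rw [hcost, hrunφ1, hmerge1] at hineq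
        have hexp : ρ * (costPR c (runPolicy π φ (n + 1 + k)) -
            (costPR c (runPolicy π φ₀ n) + c e)) =
            ρ * (costPR c (runPolicy π φ (n + 1 + k)) -
              costPR c (runPolicy π φ₀ n)) - ρ * c e := by ring
        rw [hexp] at hineq
        linarith
      · -- e inside dom ψ: observation is forced, merge unchanged
        obtain ⟨o₀, ho₀⟩ := Option.ne_none_iff_exists'.mp hcase
        obtain ⟨φ, hφU, hφψ, hrunφ, hineq⟩ := ih (n + 1) φ₀ hφ₀U hφ₀ψ
        have hrunφ1 : runPolicy π φ (n + 1) =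
            extendPR (runPolicy π φ₀ n) e (φ₀ e) := by
          rw [hrunφ, hrun1 φ₀ rfl]
        have hφext : consistent φ (extendPR (runPolicy π φ₀ n) e (φ₀ e)) := by
          rw [← hrunφ1]; exact consistent_run π φ (n + 1)
        have hφψn : consistent φ (runPolicy π φ₀ n) :=
          consistent_of_subreal (subreal_extendPR hen _) hφext
        have hφn : runPolicy π φ n = runPolicy π φ₀ n :=
          run_eq_of_consistent π hπ φ₀ φ n hφψn
        have hmerge1 : merge ψ (extendPR (runPolicy π φ₀ n) e (φ₀ e)) =
            merge ψ (runPolicy π φ₀ n) := by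
          funext x
          by_cases hx : x = e
          · subst hx
            rw [merge_apply_some ho₀, merge_apply_some ho₀]
          · cases hψx : ψ x with
            | some o' => rw [merge_apply_some hψx, merge_apply_some hψx]
            | none =>
              rw [merge_apply_none hψx, merge_apply_none hψx]
              simp [extendPR, hx]
        have hcost : costPR c (runPolicy π φ (n + 1)) =
            costPR c (runPolicy π φ₀ n) + c e := by
          rw [hrunφ1]; exact costPR_extendPR c hen _
        refine ⟨φ, hφU, hφψ, hφn, ?_⟩
        rw [harith, hφn]
        rw [hcost, hrunφ1, hmerge1] at hineq
        have hce : 0 ≤ ρ * c e := mul_nonneg hρ0 (hc e).le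
        have hexp : ρ * (costPR c (runPolicy π φ (n + 1 + k)) -
            (costPR c (runPolicy π φ₀ n) + c e)) =
            ρ * (costPR c (runPolicy π φ (n + 1 + k)) -
              costPR c (runPolicy π φ₀ n)) - ρ * c e := by ring
        rw [hexp] at hineq
        linarith
/-- **Key greedy inequality.** Suppose `f` is worst-case monotone and worst-case
submodular and `π` is an adaptive policy covering `Q`. Then for every partial
realization `ψ` consistent with some realization in `U` with `f ψ < Q`, there
exists an item `e ∈ E \ dom ψ` with `Δwc(e | ψ) · c_wc(π) ≥ (Q − f ψ) · c(e)`. -/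
theorem stmt_7 {ι O : Type*} [Fintype ι] [Nonempty ι] [DecidableEq ι] [Fintype O]
    (U : Set (ι → O)) (hU : U.Nonempty)
    (c : ι → ℝ) (hc : ∀ e, 0 < c e)
    (f : (ι → Option O) → ℝ) (hf0 : ∀ ψ, 0 ≤ f ψ)
    (hmono : WCMonotone f U) (hsub : WCSubmodular f U)
    (Q : ℝ) (π : (ι → Option O) → Option ι)
    (hπ : ValidPolicy π) (hcov : Covers f U π Q)
    (ψ : ι → Option O) (hψ : ∃ φ ∈ U, consistent φ ψ) (hfψ : f ψ < Q) :
    ∃ e, e ∉ dom ψ ∧ (Q - f ψ) * c e ≤ Dwc f U e ψ * cwc c U π := by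
  classical
  obtain ⟨φ₀, hφ₀U, hφ₀ψ⟩ := hψ
  have hQfinal : ∀ φ : ι → O, φ ∈ U → consistent φ ψ →
      Q ≤ f (merge ψ (finalPR π φ)) := by
    intro φ hφU hφψ
    have h1 : Q ≤ f (finalPR π φ) := hcov φ hφU
    have hconsF : consistent φ (finalPR π φ) := consistent_run π φ _
    have h2 : f (finalPR π φ) ≤ f (merge ψ (finalPR π φ)) :=
      f_mono_of_subreal hmono hφU _ _ _
        (subreal_merge_right hφψ hconsF) (consistent_merge hφψ hconsF) le_rfl
    linarith
  have hdom : ∃ e, ψ e = none := by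
    by_contra h
    push_neg at h
    have hm : merge ψ (finalPR π φ₀) = ψ := by
      funext x
      obtain ⟨o, ho⟩ := Option.ne_none_iff_exists'.mp (h x)
      rw [merge_apply_some ho, ho]
    have := hQfinal φ₀ hφ₀U hφ₀ψ
    rw [hm] at this
    linarith
  obtain ⟨e₀, he₀⟩ := hdom
  have hs_ne : (Finset.univ.filter fun x => (ψ x).isNone).Nonempty :=
    ⟨e₀, by simp [he₀]⟩
  obtain ⟨e, hes, hemax⟩ := (Finset.univ.filter fun x => (ψ x).isNone).exists_max_image
    (fun x => Dwc f U x ψ / c x) hs_ne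
  have heψ : ψ e = none := by
    simp only [Finset.mem_filter, Finset.mem_univ, true_and,
      Option.isNone_iff_eq_none] at hes
    exact hes
  have hDe0 : 0 ≤ Dwc f U e ψ := hmono ψ ⟨φ₀, hφ₀U, hφ₀ψ⟩ e (notMem_dom.mpr heψ)
  have hρ0 : 0 ≤ Dwc f U e ψ / c e := div_nonneg hDe0 (hc e).le
  have hρall : ∀ e', ψ e' = none → Dwc f U e' ψ ≤ (Dwc f U e ψ / c e) * c e' := by
    intro e' he'
    have hmax := hemax e' (by simp [he'])
    exact (div_le_iff₀ (hc e')).mp hmax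
  obtain ⟨φ, hφU, hφψ, hrun0, hkey⟩ := mainInd U c hc f hsub π hπ ψ
    (Dwc f U e ψ / c e) hρ0 hρall (Fintype.card ι) 0 φ₀ hφ₀U hφ₀ψ
  have hmergeempty : merge ψ (runPolicy π φ 0) = ψ := by
    funext x
    cases hx : ψ x with
    | some o => rw [merge_apply_some hx]
    | none => simp [merge_apply_none hx, hx, runPolicy, emptyPR]
  have hcost0 : costPR c (runPolicy π φ 0) = 0 := by
    simp [runPolicy, emptyPR, costPR]
  have hkey' : f (merge ψ (finalPR π φ)) - f ψ ≤
      (Dwc f U e ψ / c e) * costPR c (finalPR π φ) := by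
    have : (0 : ℕ) + Fintype.card ι = Fintype.card ι := by omega
    rw [this, hmergeempty, hcost0] at hkey
    simpa [finalPR] using hkey
  have hQ : Q ≤ f (merge ψ (finalPR π φ)) := hQfinal φ hφU hφψ
  have hcwc : costPR c (finalPR π φ) ≤ cwc c U π := by
    apply le_csSup
    · refine ⟨∑ x, c x, ?_⟩
      rintro y ⟨φ', _, rfl⟩
      exact costPR_le_sum c hc _
    · exact ⟨φ, hφU, rfl⟩
  have h1 : Q - f ψ ≤ (Dwc f U e ψ / c e) * cwc c U π := by
    calc Q - f ψ ≤ (Dwc f U e ψ / c e) * costPR c (finalPR π φ) := by linarith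
    _ ≤ (Dwc f U e ψ / c e) * cwc c U π := mul_le_mul_of_nonneg_left hcwc hρ0
  refine ⟨e, notMem_dom.mpr heψ, ?_⟩
  have h2 := mul_le_mul_of_nonneg_right h1 (hc e).le
  have h3 : (Dwc f U e ψ / c e) * c e = Dwc f U e ψ :=
    div_mul_cancel₀ _ (hc e).ne'
  calc (Q - f ψ) * c e ≤ (Dwc f U e ψ / c e) * cwc c U π * c e := h2
  _ = ((Dwc f U e ψ / c e) * c e) * cwc c U π := by ring
  _ = Dwc f U e ψ * cwc c U π := by rw [h3]

end WCAS
end
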